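/- There exists a constant C > 0 with the following property. Let Ω ∈ 𝓘 and let a ∈ L²(𝕋) be supported in Ω with ∫_𝕋 a dθ = 0, ‖a‖_{L²(𝕋)} ≤ |Ω|^{-1/2}, and only finitely many nonzero Haar coefficients ⟨a,h_I⟩. Let b ∈ L²(𝕋) satisfy ∫_𝕋 b dθ = 0 and have only finitely many nonzero Haar coefficients ⟨b,h_I⟩. Then the function Π₃(a,b) := Σ_{I∈𝓘} ⟨a,h_I⟩ ⟨b,h_I⟩ χ_I / |I| satisfies ‖Π₃(a,b)‖_{L¹(𝕋)} ≤ C ‖b‖_{BMO⁺_𝓘(𝕋)}. -/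

import Mathlib

open MeasureTheory Real Set ENNReal

noncomputable section

/-- `Ψ₀(t) = t / log(e+t)`. -/
def psi0 (t : ℝ) : ℝ := t / Real.log (Real.exp 1 + t)

/-- `Ψ₀` on `[0,∞]`, with `Ψ₀(∞) = ∞`. -/
def psi0E (t : ℝ≥0∞) : ℝ≥0∞ := t / ENNReal.ofReal (Real.log (Real.exp 1 + t.toReal))

/-- The length `2π·2^{-k}` of a dyadic arc of generation `k`. -/
def arcLen (k : ℕ) : ℝ := 2 * π / 2 ^ k

/-- The left endpoint `2π(2^{-k} m + δ)` of the dyadic arc `I = I^δ(k,m)`. -/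
def arcStart (δ : ℝ) (k m : ℕ) : ℝ := 2 * π * ((m : ℝ) / 2 ^ k + δ)

/-- The dyadic arc `I^δ(k,m) = [2π(2^{-k}m + δ), 2π(2^{-k}(m+1) + δ))`. -/
def arc (δ : ℝ) (k m : ℕ) : Set ℝ := Ico (arcStart δ k m) (arcStart δ k m + arcLen k)

/-- The Haar function `h_I = |I|^{-1/2}(χ_{I_-} - χ_{I_+})` of the arc `I^δ(k,m)`. -/
def haar (δ : ℝ) (k m : ℕ) : ℝ → ℝ := fun θ =>
  (arcLen k) ^ (-(1 : ℝ) / 2) *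
    ((Ico (arcStart δ k m) (arcStart δ k m + arcLen k / 2)).indicator (fun _ => (1 : ℝ)) θ -
      (Ico (arcStart δ k m + arcLen k / 2) (arcStart δ k m + arcLen k)).indicator
        (fun _ => (1 : ℝ)) θ)

/-- The fundamental domain `[2πδ, 2πδ + 2π)` of the torus, containing all arcs of `𝓘^δ`. -/
def torus (δ : ℝ) : Set ℝ := Ico (2 * π * δ) (2 * π * δ + 2 * π)

/-- The Haar coefficient `⟨f, h_I⟩ = ∫_𝕋 f h_I dθ`. -/
def haarCoeff (δ : ℝ) (k m : ℕ) (f : ℝ → ℝ) : ℝ := ∫ θ in torus δ, f θ * haar δ k m θ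

/-- The dyadic square function `S_𝓘[f] = (Σ_{I∈𝓘} |⟨f,h_I⟩|² χ_I/|I|)^{1/2}` (valued in `[0,∞]`). -/
def sqFn (δ : ℝ) (f : ℝ → ℝ) (θ : ℝ) : ℝ≥0∞ :=
  (∑' (k : ℕ) (m : Fin (2 ^ k)),
      (‖haarCoeff δ k m f‖₊ : ℝ≥0∞) ^ 2 *
        (arc δ k m).indicator (fun _ => (ENNReal.ofReal (arcLen k))⁻¹) θ) ^ (1 / 2 : ℝ)

/-- The `L^∞` norm (essential supremum of `|f|`), valued in `[0,∞]`. -/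
def einfNorm (f : ℝ → ℝ) : ℝ≥0∞ := essSup (fun θ => (‖f θ‖₊ : ℝ≥0∞)) volume

/-- The average `⟨b⟩_I = |I|⁻¹ ∫_I b` over the arc `I^δ(k,m)`. -/
def arcAvg (δ : ℝ) (k m : ℕ) (b : ℝ → ℝ) : ℝ := (arcLen k)⁻¹ * ∫ θ in arc δ k m, b θ

/-- The dyadic `BMO⁺` norm, valued in `[0,∞]`. -/
def bmoNorm (δ : ℝ) (b : ℝ → ℝ) : ℝ≥0∞ :=
  (⨆ (k : ℕ) (m : Fin (2 ^ k)),
      ((ENNReal.ofReal (arcLen k))⁻¹) ^ 2 *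
        ∫⁻ θ in arc δ k m, (‖b θ - arcAvg δ k m b‖₊ : ℝ≥0∞) ^ 2) ^ (1 / 2 : ℝ) +
    ENNReal.ofReal |∫ θ in torus δ, b θ|

/-- The pointwise product part `Π₃(a,b) = Σ_{I∈𝓘} ⟨a,h_I⟩⟨b,h_I⟩ χ_I/|I|`. -/
def Pi3 (δ : ℝ) (a b : ℝ → ℝ) : ℝ → ℝ := fun θ =>
  ∑' (k : ℕ) (m : Fin (2 ^ k)),
    haarCoeff δ k m a * haarCoeff δ k m b *
      (arc δ k m).indicator (fun _ => (arcLen k)⁻¹) θ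

namespace Stmt12Aux

lemma arcLen_pos (k : ℕ) : 0 < arcLen k := by
  unfold arcLen; positivity

lemma arcLen_le (k : ℕ) : arcLen k ≤ 2 * π := by
  unfold arcLen
  rw [div_le_iff₀ (by positivity)]
  have h : (1:ℝ) ≤ 2 ^ k := by exact_mod_cast Nat.one_le_two_pow
  nlinarith [Real.pi_pos]

lemma arcLen_succ (k : ℕ) : arcLen (k + 1) = arcLen k / 2 := by
  unfold arcLen; rw [pow_succ]; ring

lemma arcStart_succ_even (δ : ℝ) (k m : ℕ) :
    arcStart δ (k + 1) (2 * m) = arcStart δ k m := by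
  unfold arcStart
  have h : (0:ℝ) < 2 ^ k := by positivity
  rw [pow_succ]; push_cast; field_simp

lemma arcStart_succ_odd (δ : ℝ) (k m : ℕ) :
    arcStart δ (k + 1) (2 * m + 1) = arcStart δ k m + arcLen k / 2 := by
  unfold arcStart arcLen
  have h : (0:ℝ) < 2 ^ k := by positivity
  rw [pow_succ]; push_cast; field_simp; ring

lemma arcStart_add (δ : ℝ) (k m : ℕ) :
    arcStart δ k m + arcLen k = arcStart δ k (m + 1) := by
  unfold arcStart arcLen
  have h : (0:ℝ) < 2 ^ k := by positivity
  field_simp; push_cast; ring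

lemma arcStart_mono (δ : ℝ) (k : ℕ) {m m' : ℕ} (h : m ≤ m') :
    arcStart δ k m ≤ arcStart δ k m' := by
  unfold arcStart
  have hp : (0:ℝ) < 2 ^ k := by positivity
  have hc : (m:ℝ) ≤ m' := by exact_mod_cast h
  have h2 : (m:ℝ)/2^k ≤ (m':ℝ)/2^k := by gcongr
  nlinarith [Real.pi_pos]

lemma arc_succ_left (δ : ℝ) (k m : ℕ) :
    arc δ (k + 1) (2 * m) = Ico (arcStart δ k m) (arcStart δ k m + arcLen k / 2) := by
  unfold arc; rw [arcStart_succ_even, arcLen_succ]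

lemma arc_succ_right (δ : ℝ) (k m : ℕ) :
    arc δ (k + 1) (2 * m + 1) = Ico (arcStart δ k m + arcLen k / 2) (arcStart δ k m + arcLen k) := by
  unfold arc; rw [arcStart_succ_odd, arcLen_succ]; congr 1; ring

lemma arc_union (δ : ℝ) (k m : ℕ) :
    arc δ (k + 1) (2 * m) ∪ arc δ (k + 1) (2 * m + 1) = arc δ k m := by
  rw [arc_succ_left, arc_succ_right]
  exact Ico_union_Ico_eq_Ico (by linarith [arcLen_pos k]) (by linarith [arcLen_pos k])

lemma measurableSet_arc (δ : ℝ) (k m : ℕ) : MeasurableSet (arc δ k m) := measurableSet_Ico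

lemma volume_arc (δ : ℝ) (k m : ℕ) : volume (arc δ k m) = ENNReal.ofReal (arcLen k) := by
  unfold arc; rw [Real.volume_Ico]; congr 1; ring

lemma arc_disjoint {δ : ℝ} {k m m' : ℕ} (h : m ≠ m') :
    Disjoint (arc δ k m) (arc δ k m') := by
  have key : ∀ m m' : ℕ, m < m' → Disjoint (arc δ k m) (arc δ k m') := by
    intro m m' hlt
    unfold arc
    rw [Set.Ico_disjoint_Ico]
    refine le_trans (min_le_left _ _) (le_trans ?_ (le_max_right _ _))
    rw [arcStart_add]
    exact arcStart_mono δ k hlt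
  rcases Nat.lt_or_ge m m' with h' | h'
  · exact key _ _ h'
  · exact (key _ _ (lt_of_le_of_ne h' (Ne.symm h))).symm

lemma div_pow_le_div_pow {k k' q m' : ℕ} (hk : k ≤ k') (h : q * 2 ^ (k' - k) ≤ m') :
    (q:ℝ) / 2 ^ k ≤ (m':ℝ) / 2 ^ k' := by
  have e : (2:ℝ) ^ k' = 2 ^ k * 2 ^ (k' - k) := by
    rw [← pow_add]; congr 1; omega
  have hc : (q:ℝ) * 2 ^ (k' - k) ≤ (m':ℝ) := by exact_mod_cast h
  rw [e, div_le_div_iff₀ (by positivity) (by positivity)]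
  calc (q:ℝ) * (2 ^ k * 2 ^ (k' - k)) = (q * 2 ^ (k' - k)) * 2 ^ k := by ring
    _ ≤ (m':ℝ) * 2 ^ k := by
        apply mul_le_mul_of_nonneg_right hc (by positivity)

lemma div_pow_le_div_pow' {k k' q m' : ℕ} (hk : k ≤ k') (h : m' ≤ q * 2 ^ (k' - k)) :
    (m':ℝ) / 2 ^ k' ≤ (q:ℝ) / 2 ^ k := by
  have e : (2:ℝ) ^ k' = 2 ^ k * 2 ^ (k' - k) := by
    rw [← pow_add]; congr 1; omega
  have hc : (m':ℝ) ≤ (q:ℝ) * 2 ^ (k' - k) := by exact_mod_cast h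
  rw [e, div_le_div_iff₀ (by positivity) (by positivity)]
  calc (m':ℝ) * 2 ^ k ≤ ((q:ℝ) * 2 ^ (k' - k)) * 2 ^ k := by
        apply mul_le_mul_of_nonneg_right hc (by positivity)
    _ = (q:ℝ) * (2 ^ k * 2 ^ (k' - k)) := by ring

lemma arcStart_le_of_div_le {δ : ℝ} {k k' q m' : ℕ} (h : (q:ℝ)/2^k ≤ (m':ℝ)/2^k') :
    arcStart δ k q ≤ arcStart δ k' m' := by
  unfold arcStart; nlinarith [Real.pi_pos]

lemma arc_subset {δ : ℝ} {k k' : ℕ} (hk : k ≤ k') (m' : ℕ) :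
    arc δ k' m' ⊆ arc δ k (m' / 2 ^ (k' - k)) := by
  set q := m' / 2 ^ (k' - k) with hq
  have hpos : 0 < 2 ^ (k' - k) := Nat.pow_pos (by norm_num)
  have h1 : q * 2 ^ (k' - k) ≤ m' := Nat.div_mul_le_self _ _
  have h2 : m' + 1 ≤ (q + 1) * 2 ^ (k' - k) := by
    have hd := Nat.div_add_mod m' (2 ^ (k' - k))
    have hm := Nat.mod_lt m' hpos
    calc m' + 1 = 2 ^ (k' - k) * q + m' % 2 ^ (k' - k) + 1 := by rw [hd]
      _ ≤ 2 ^ (k' - k) * q + 2 ^ (k' - k) := by omega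
      _ = (q + 1) * 2 ^ (k' - k) := by ring
  unfold arc
  apply Ico_subset_Ico
  · exact arcStart_le_of_div_le (div_pow_le_div_pow hk h1)
  · rw [arcStart_add, arcStart_add]
    exact arcStart_le_of_div_le (k := k') (k' := k) (div_pow_le_div_pow' hk (by push_cast at h2 ⊢; omega))

lemma arc_subset_torus {δ : ℝ} {k m : ℕ} (hm : m < 2 ^ k) : arc δ k m ⊆ torus δ := by
  unfold torus arc
  have hp : (0:ℝ) < 2 ^ k := by positivity
  apply Ico_subset_Ico
  · unfold arcStart
    have : (0:ℝ) ≤ (m:ℝ)/2^k := by positivity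
    nlinarith [Real.pi_pos]
  · rw [arcStart_add]
    unfold arcStart
    have h1 : ((m:ℝ)+1)/2^k ≤ 1 := by
      rw [div_le_one hp]
      have : ((m:ℕ):ℝ) + 1 ≤ ((2^k : ℕ) : ℝ) := by exact_mod_cast hm
      push_cast at this ⊢; linarith
    push_cast
    nlinarith [Real.pi_pos]

lemma haar_apply (δ : ℝ) (k m : ℕ) (θ : ℝ) :
    haar δ k m θ = (arcLen k) ^ (-(1:ℝ)/2) *
      ((arc δ (k+1) (2*m)).indicator (fun _ => (1:ℝ)) θ -
        (arc δ (k+1) (2*m+1)).indicator (fun _ => (1:ℝ)) θ) := by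
  rw [arc_succ_left, arc_succ_right]; rfl

lemma rpow_haar_pos (k : ℕ) : 0 < (arcLen k) ^ (-(1:ℝ)/2) :=
  Real.rpow_pos_of_pos (arcLen_pos k) _

lemma haar_apply_left {δ : ℝ} {k m : ℕ} {θ : ℝ} (h : θ ∈ arc δ (k+1) (2*m)) :
    haar δ k m θ = (arcLen k) ^ (-(1:ℝ)/2) := by
  have h2 : θ ∉ arc δ (k+1) (2*m+1) :=
    fun h' => (Set.disjoint_left.1 (arc_disjoint (by omega)) h) h'
  rw [haar_apply, Set.indicator_of_mem h, Set.indicator_of_notMem h2]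
  ring

lemma haar_apply_right {δ : ℝ} {k m : ℕ} {θ : ℝ} (h : θ ∈ arc δ (k+1) (2*m+1)) :
    haar δ k m θ = -((arcLen k) ^ (-(1:ℝ)/2)) := by
  have h2 : θ ∉ arc δ (k+1) (2*m) :=
    fun h' => (Set.disjoint_left.1 (arc_disjoint (by omega)) h) h'
  rw [haar_apply, Set.indicator_of_mem h, Set.indicator_of_notMem h2]
  ring

lemma haar_eq_zero {δ : ℝ} {k m : ℕ} {θ : ℝ} (h : θ ∉ arc δ k m) :
    haar δ k m θ = 0 := by
  have h1 : θ ∉ arc δ (k+1) (2*m) := fun h' => h (arc_union δ k m ▸ Set.mem_union_left _ h')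
  have h2 : θ ∉ arc δ (k+1) (2*m+1) := fun h' => h (arc_union δ k m ▸ Set.mem_union_right _ h')
  rw [haar_apply, Set.indicator_of_notMem h1, Set.indicator_of_notMem h2]
  ring

lemma haar_support {δ : ℝ} {k m : ℕ} {θ : ℝ} (h : haar δ k m θ ≠ 0) : θ ∈ arc δ k m := by
  by_contra hc; exact h (haar_eq_zero hc)

lemma haar_eq_zero' {δ : ℝ} {k m q : ℕ} {θ : ℝ} (h1 : q ≠ 2*m) (h2 : q ≠ 2*m+1)
    (hθ : θ ∈ arc δ (k+1) q) : haar δ k m θ = 0 := by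
  have ha : θ ∉ arc δ (k+1) (2*m) := fun h' => (Set.disjoint_left.1 (arc_disjoint h1) hθ) h'
  have hb : θ ∉ arc δ (k+1) (2*m+1) := fun h' => (Set.disjoint_left.1 (arc_disjoint h2) hθ) h'
  rw [haar_apply, Set.indicator_of_notMem ha, Set.indicator_of_notMem hb]
  ring

lemma abs_haar_le (δ : ℝ) (k m : ℕ) (θ : ℝ) : ‖haar δ k m θ‖ ≤ (arcLen k) ^ (-(1:ℝ)/2) := by
  by_cases h1 : θ ∈ arc δ (k+1) (2*m)
  · rw [haar_apply_left h1, Real.norm_eq_abs, abs_of_pos (rpow_haar_pos k)]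
  · by_cases h2 : θ ∈ arc δ (k+1) (2*m+1)
    · rw [haar_apply_right h2, norm_neg, Real.norm_eq_abs, abs_of_pos (rpow_haar_pos k)]
    · rw [haar_apply, Set.indicator_of_notMem h1, Set.indicator_of_notMem h2]
      simp [le_of_lt (rpow_haar_pos k)]

lemma measurable_haar (δ : ℝ) (k m : ℕ) : Measurable (haar δ k m) := by
  unfold haar
  exact ((measurable_const.indicator measurableSet_Ico).sub
    (measurable_const.indicator measurableSet_Ico)).const_mul _

lemma isFiniteMeasure_torus (δ : ℝ) : IsFiniteMeasure (volume.restrict (torus δ)) := by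
  constructor
  rw [Measure.restrict_apply_univ]
  unfold torus
  rw [Real.volume_Ico]
  exact ofReal_lt_top

lemma memLp_haar (δ : ℝ) (k m : ℕ) : MemLp (haar δ k m) 2 (volume.restrict (torus δ)) := by
  have h : haar δ k m = fun θ => (arcLen k) ^ (-(1:ℝ)/2) *
      ((arc δ (k+1) (2*m)).indicator (fun _ => (1:ℝ)) θ -
        (arc δ (k+1) (2*m+1)).indicator (fun _ => (1:ℝ)) θ) := funext (haar_apply δ k m)
  rw [h]
  haveI := isFiniteMeasure_torus δ
  have hi : ∀ q : ℕ, MemLp ((arc δ (k+1) q).indicator (fun _ => (1:ℝ))) 2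
      (volume.restrict (torus δ)) := fun q =>
    (memLp_const (1:ℝ)).indicator (measurableSet_arc δ (k+1) q)
  exact ((hi (2*m)).sub (hi (2*m+1))).const_mul _

lemma integrable_indicator_one (δ : ℝ) {A : Set ℝ} (hA : MeasurableSet A) :
    Integrable (A.indicator fun _ => (1:ℝ)) (volume.restrict (torus δ)) := by
  haveI := isFiniteMeasure_torus δ
  exact (integrable_const 1).indicator hA

lemma integral_indicator_one (δ : ℝ) {A : Set ℝ} (hA : MeasurableSet A) (hAt : A ⊆ torus δ) :
    ∫ θ in torus δ, A.indicator (fun _ => (1:ℝ)) θ = (volume A).toReal := by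
  rw [setIntegral_indicator hA, Set.inter_eq_self_of_subset_right hAt, setIntegral_const,
    smul_eq_mul, mul_one]
  rfl

lemma two_mul_lt {k m : ℕ} (hm : m < 2 ^ k) : 2*m + 1 < 2 ^ (k+1) := by
  rw [pow_succ]; omega

lemma integral_haar (δ : ℝ) {k m : ℕ} (hm : m < 2 ^ k) :
    ∫ θ in torus δ, haar δ k m θ = 0 := by
  have h : haar δ k m = fun θ => (arcLen k) ^ (-(1:ℝ)/2) *
      ((arc δ (k+1) (2*m)).indicator (fun _ => (1:ℝ)) θ -
        (arc δ (k+1) (2*m+1)).indicator (fun _ => (1:ℝ)) θ) := funext (haar_apply δ k m)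
  rw [h, integral_const_mul,
    integral_sub (integrable_indicator_one δ (measurableSet_arc δ (k+1) (2*m)))
      (integrable_indicator_one δ (measurableSet_arc δ (k+1) (2*m+1))),
    integral_indicator_one δ (measurableSet_arc δ (k+1) (2*m))
      (arc_subset_torus (by have := two_mul_lt hm; omega)),
    integral_indicator_one δ (measurableSet_arc δ (k+1) (2*m+1))
      (arc_subset_torus (two_mul_lt hm)),
    volume_arc, volume_arc, sub_self, mul_zero]

lemma rpow_haar_sq (k : ℕ) : ((arcLen k) ^ (-(1:ℝ)/2))^2 = (arcLen k)⁻¹ := by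
  rw [← Real.rpow_natCast ((arcLen k) ^ (-(1:ℝ)/2)) 2, ← Real.rpow_mul (arcLen_pos k).le]
  norm_num
  exact Real.rpow_neg_one _

lemma integral_haar_sq (δ : ℝ) {k m : ℕ} (hm : m < 2 ^ k) :
    ∫ θ in torus δ, haar δ k m θ * haar δ k m θ = 1 := by
  have hptw : ∀ θ, haar δ k m θ * haar δ k m θ = ((arcLen k) ^ (-(1:ℝ)/2))^2 *
      ((arc δ (k+1) (2*m)).indicator (fun _ => (1:ℝ)) θ +
        (arc δ (k+1) (2*m+1)).indicator (fun _ => (1:ℝ)) θ) := by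
    intro θ
    by_cases h1 : θ ∈ arc δ (k+1) (2*m)
    · have h2 : θ ∉ arc δ (k+1) (2*m+1) :=
        fun h' => (Set.disjoint_left.1 (arc_disjoint (by omega)) h1) h'
      rw [haar_apply_left h1, Set.indicator_of_mem h1, Set.indicator_of_notMem h2]
      ring
    · by_cases h2 : θ ∈ arc δ (k+1) (2*m+1)
      · rw [haar_apply_right h2, Set.indicator_of_mem h2, Set.indicator_of_notMem h1]
        ring
      · rw [haar_apply, Set.indicator_of_notMem h1, Set.indicator_of_notMem h2]
        ring
  simp_rw [hptw]
  rw [integral_const_mul,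
    integral_add (integrable_indicator_one δ (measurableSet_arc δ (k+1) (2*m)))
      (integrable_indicator_one δ (measurableSet_arc δ (k+1) (2*m+1))),
    integral_indicator_one δ (measurableSet_arc δ (k+1) (2*m))
      (arc_subset_torus (by have := two_mul_lt hm; omega)),
    integral_indicator_one δ (measurableSet_arc δ (k+1) (2*m+1))
      (arc_subset_torus (two_mul_lt hm)),
    volume_arc, volume_arc, rpow_haar_sq, toReal_ofReal (arcLen_pos (k+1)).le,
    arcLen_succ]
  have := arcLen_pos k
  field_simp
  norm_num

lemma integral_haar_mul_same (δ : ℝ) {k m m' : ℕ} (h : m ≠ m') :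
    ∫ θ in torus δ, haar δ k m θ * haar δ k m' θ = 0 := by
  have hptw : ∀ θ, haar δ k m θ * haar δ k m' θ = 0 := by
    intro θ
    by_cases h1 : haar δ k m θ = 0
    · rw [h1, zero_mul]
    by_cases h2 : haar δ k m' θ = 0
    · rw [h2, mul_zero]
    exact absurd (haar_support h2)
      (Set.disjoint_left.1 (arc_disjoint h) (haar_support h1))
  simp_rw [hptw, integral_zero]

lemma integral_haar_mul_lt (δ : ℝ) {k k' m m' : ℕ} (h : k < k') (hm' : m' < 2 ^ k') :
    ∫ θ in torus δ, haar δ k m θ * haar δ k' m' θ = 0 := by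
  have hk1 : k + 1 ≤ k' := h
  set q := m' / 2 ^ (k' - (k+1)) with hq
  have hsub : arc δ k' m' ⊆ arc δ (k+1) q := arc_subset hk1 m'
  by_cases h1 : q = 2*m
  · have hptw : ∀ θ, haar δ k m θ * haar δ k' m' θ =
        (arcLen k) ^ (-(1:ℝ)/2) * haar δ k' m' θ := by
      intro θ
      by_cases hz : haar δ k' m' θ = 0
      · rw [hz, mul_zero, mul_zero]
      · rw [haar_apply_left (h1 ▸ hsub (haar_support hz))]
    simp_rw [hptw]
    rw [integral_const_mul, integral_haar δ hm', mul_zero]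
  · by_cases h2 : q = 2*m+1
    · have hptw : ∀ θ, haar δ k m θ * haar δ k' m' θ =
          -((arcLen k) ^ (-(1:ℝ)/2)) * haar δ k' m' θ := by
        intro θ
        by_cases hz : haar δ k' m' θ = 0
        · rw [hz, mul_zero, mul_zero]
        · rw [haar_apply_right (h2 ▸ hsub (haar_support hz))]
      simp_rw [hptw]
      rw [integral_const_mul, integral_haar δ hm', mul_zero]
    · have hptw : ∀ θ, haar δ k m θ * haar δ k' m' θ = 0 := by
        intro θ
        by_cases hz : haar δ k' m' θ = 0
        · rw [hz, mul_zero]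
        · rw [haar_eq_zero' h1 h2 (hsub (haar_support hz)), zero_mul]
      simp_rw [hptw, integral_zero]

lemma integral_haar_mul (δ : ℝ) {k k' m m' : ℕ} (hm : m < 2 ^ k) (hm' : m' < 2 ^ k')
    (hne : (k, m) ≠ (k', m')) :
    ∫ θ in torus δ, haar δ k m θ * haar δ k' m' θ = 0 := by
  rcases lt_trichotomy k k' with h | h | h
  · exact integral_haar_mul_lt δ h hm'
  · subst h
    exact integral_haar_mul_same δ (fun he => hne (by rw [he]))
  · have := integral_haar_mul_lt δ h hm (m := m')
    calc ∫ θ in torus δ, haar δ k m θ * haar δ k' m' θ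
        = ∫ θ in torus δ, haar δ k' m' θ * haar δ k m θ := by simp_rw [mul_comm]
      _ = 0 := this

lemma haarCoeff_eq_zero {δ : ℝ} {K M k m : ℕ} {a : ℝ → ℝ}
    (hsupp : Function.support a ⊆ arc δ K M) (hzero : (∫ θ in torus δ, a θ) = 0)
    (hne : ¬ arc δ k m ⊆ arc δ K M) : haarCoeff δ k m a = 0 := by
  unfold haarCoeff
  rcases le_or_gt K k with hKk | hkK
  · set q := m / 2 ^ (k - K) with hq
    have hsub : arc δ k m ⊆ arc δ K q := arc_subset hKk m
    rcases eq_or_ne q M with hqM | hqM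
    · exact absurd (hqM ▸ hsub) hne
    · have hptw : ∀ θ, a θ * haar δ k m θ = 0 := by
        intro θ
        by_cases ha : a θ = 0
        · rw [ha, zero_mul]
        by_cases hh : haar δ k m θ = 0
        · rw [hh, mul_zero]
        exact absurd (hsupp ha)
          (Set.disjoint_left.1 (arc_disjoint hqM) (hsub (haar_support hh)))
      simp_rw [hptw, integral_zero]
  · have hk1K : k + 1 ≤ K := hkK
    set q := M / 2 ^ (K - (k+1)) with hq
    have hsub : arc δ K M ⊆ arc δ (k+1) q := arc_subset hk1K M
    by_cases h1 : q = 2*m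
    · have hptw : ∀ θ, a θ * haar δ k m θ = (arcLen k) ^ (-(1:ℝ)/2) * a θ := by
        intro θ
        by_cases ha : a θ = 0
        · rw [ha, zero_mul, mul_zero]
        · rw [haar_apply_left (h1 ▸ hsub (hsupp ha)), mul_comm]
      simp_rw [hptw]
      rw [integral_const_mul, hzero, mul_zero]
    · by_cases h2 : q = 2*m+1
      · have hptw : ∀ θ, a θ * haar δ k m θ = -((arcLen k) ^ (-(1:ℝ)/2)) * a θ := by
          intro θ
          by_cases ha : a θ = 0
          · rw [ha, zero_mul, mul_zero]
          · rw [haar_apply_right (h2 ▸ hsub (hsupp ha)), mul_comm]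
        simp_rw [hptw]
        rw [integral_const_mul, hzero, mul_zero]
      · have hptw : ∀ θ, a θ * haar δ k m θ = 0 := by
          intro θ
          by_cases ha : a θ = 0
          · rw [ha, zero_mul]
          · rw [haar_eq_zero' h1 h2 (hsub (hsupp ha)), mul_zero]
        simp_rw [hptw, integral_zero]


open scoped RealInnerProductSpace

lemma inner_toLp (δ : ℝ) {f g : ℝ → ℝ} (hf : MemLp f 2 (volume.restrict (torus δ)))
    (hg : MemLp g 2 (volume.restrict (torus δ))) :
    ⟪MemLp.toLp f hf, MemLp.toLp g hg⟫ = ∫ θ in torus δ, f θ * g θ := by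
  rw [L2.inner_def]
  apply integral_congr_ae
  filter_upwards [hf.coeFn_toLp, hg.coeFn_toLp] with θ h1 h2
  rw [h1, h2]
  simp [RCLike.inner_apply]
  ring

lemma lintegral_term (δ : ℝ) {k m : ℕ} (hm : m < 2 ^ k) (c : ℝ) :
    ∫⁻ θ in torus δ, (‖c * (arc δ k m).indicator (fun _ => (arcLen k)⁻¹) θ‖₊ : ℝ≥0∞)
      = ENNReal.ofReal |c| := by
  have hptw : ∀ θ, (‖c * (arc δ k m).indicator (fun _ => (arcLen k)⁻¹) θ‖₊ : ℝ≥0∞)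
      = (arc δ k m).indicator (fun _ => ENNReal.ofReal (|c| * (arcLen k)⁻¹)) θ := by
    intro θ
    by_cases h : θ ∈ arc δ k m
    · rw [Set.indicator_of_mem h, Set.indicator_of_mem h, ← enorm_eq_nnnorm, Real.enorm_eq_ofReal_abs, abs_mul,
        abs_of_nonneg (inv_nonneg.2 (arcLen_pos k).le)]
    · rw [Set.indicator_of_notMem h, Set.indicator_of_notMem h, mul_zero]
      simp
  simp_rw [hptw]
  rw [lintegral_indicator (measurableSet_arc δ k m),
    Measure.restrict_restrict (measurableSet_arc δ k m),
    Set.inter_eq_self_of_subset_left (arc_subset_torus hm),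
    setLIntegral_const, volume_arc, ← ENNReal.ofReal_mul (mul_nonneg (abs_nonneg c) (inv_nonneg.2 (arcLen_pos k).le))]
  congr 1
  have := arcLen_pos k
  field_simp

end Stmt12Aux

open Stmt12Aux
open scoped RealInnerProductSpace


/-- The diagonal paraproduct `Π₃` maps (dyadic atom, dyadic `BMO⁺`) boundedly into `L¹(𝕋)`. -/
theorem stmt12 :
    ∃ C > (0 : ℝ), ∀ (δ : ℝ), 0 ≤ δ → δ < 1 →
      ∀ (K M : ℕ), M < 2 ^ K → ∀ a b : ℝ → ℝ,
      Measurable a → MemLp a 2 (volume.restrict (torus δ)) →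
      Function.support a ⊆ arc δ K M →
      (∫ θ in torus δ, a θ) = 0 →
      eLpNorm a 2 (volume.restrict (torus δ)) ≤ ENNReal.ofReal ((arcLen K) ^ (-(1 : ℝ) / 2)) →
      {p : ℕ × ℕ | p.2 < 2 ^ p.1 ∧ haarCoeff δ p.1 p.2 a ≠ 0}.Finite →
      Measurable b → MemLp b 2 (volume.restrict (torus δ)) →
      (∫ θ in torus δ, b θ) = 0 →
      {p : ℕ × ℕ | p.2 < 2 ^ p.1 ∧ haarCoeff δ p.1 p.2 b ≠ 0}.Finite →
      (∫⁻ θ in torus δ, (‖Pi3 δ a b θ‖₊ : ℝ≥0∞)) ≤ ENNReal.ofReal C * bmoNorm δ b := by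

  classical
  refine ⟨Real.sqrt (2*π) + 1, by positivity, ?_⟩
  intro δ hδ0 hδ1 K M hM a b ha_meas ha_mem ha_supp ha_int0 ha_norm hFa hb_meas hb_mem hb_int0 hFb
  haveI := isFiniteMeasure_torus δ
  -- Finsets of relevant indices
  set Fs : Finset (ℕ × ℕ) := hFa.toFinset with hFs
  set Ks : Finset ℕ := Fs.image Prod.fst with hKs
  set Bs : Finset (ℕ × ℕ) :=
    Ks.biUnion (fun k => (Finset.range (2^k)).image (fun m => (k, m))) with hBs
  have hmemBs : ∀ p : ℕ × ℕ, p ∈ Bs ↔ p.1 ∈ Ks ∧ p.2 < 2 ^ p.1 := by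
    intro p
    simp only [hBs, Finset.mem_biUnion, Finset.mem_image, Finset.mem_range]
    constructor
    · rintro ⟨k, hk, m, hm, rfl⟩; exact ⟨hk, hm⟩
    · rintro ⟨h1, h2⟩; exact ⟨p.1, h1, p.2, h2, rfl⟩
  have hcoeff0 : ∀ k m : ℕ, m < 2 ^ k → (k, m) ∉ Fs → haarCoeff δ k m a = 0 := by
    intro k m h1 h2
    by_contra h
    exact h2 (hFa.mem_toFinset.mpr ⟨h1, h⟩)
  -- pointwise finite-sum representation of Pi3
  have hPi : ∀ θ, Pi3 δ a b θ = ∑ k ∈ Ks, ∑ m : Fin (2^k),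
      haarCoeff δ k (↑m) a * haarCoeff δ k (↑m) b *
        (arc δ k ↑m).indicator (fun _ => (arcLen k)⁻¹) θ := by
    intro θ
    unfold Pi3
    simp_rw [tsum_fintype]
    apply tsum_eq_sum
    intro k hk
    apply Finset.sum_eq_zero
    intro m _
    have h0 : haarCoeff δ k (↑m) a = 0 := by
      apply hcoeff0 _ _ m.isLt
      intro hmem
      exact hk (Finset.mem_image.mpr ⟨(k, ↑m), hmem, rfl⟩)
    rw [h0, zero_mul, zero_mul]
  -- step 1 : bound the L¹ norm by the sum of coefficient products
  have hmeasT : ∀ (k : ℕ) (m : Fin (2^k)), Measurable (fun θ =>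
      (‖haarCoeff δ k (↑m) a * haarCoeff δ k (↑m) b *
        (arc δ k ↑m).indicator (fun _ => (arcLen k)⁻¹) θ‖₊ : ℝ≥0∞)) := by
    intro k m
    apply Measurable.coe_nnreal_ennreal
    apply Measurable.nnnorm
    exact (measurable_const.indicator (measurableSet_arc δ k ↑m)).const_mul _
  have hstep1 : (∫⁻ θ in torus δ, (‖Pi3 δ a b θ‖₊ : ℝ≥0∞)) ≤
      ∑ k ∈ Ks, ∑ m : Fin (2^k),
        ENNReal.ofReal |haarCoeff δ k (↑m) a * haarCoeff δ k (↑m) b| := by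
    have hb1 : (∫⁻ θ in torus δ, (‖Pi3 δ a b θ‖₊ : ℝ≥0∞)) ≤
        ∫⁻ θ in torus δ, ∑ k ∈ Ks, ∑ m : Fin (2^k),
          (‖haarCoeff δ k (↑m) a * haarCoeff δ k (↑m) b *
            (arc δ k ↑m).indicator (fun _ => (arcLen k)⁻¹) θ‖₊ : ℝ≥0∞) := by
      apply lintegral_mono
      intro θ
      simp only [hPi θ]
      calc ((‖∑ k ∈ Ks, ∑ m : Fin (2^k), haarCoeff δ k (↑m) a * haarCoeff δ k (↑m) b *
            (arc δ k ↑m).indicator (fun _ => (arcLen k)⁻¹) θ‖₊ : ℝ≥0∞))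
          ≤ ∑ k ∈ Ks, (‖∑ m : Fin (2^k), haarCoeff δ k (↑m) a * haarCoeff δ k (↑m) b *
            (arc δ k ↑m).indicator (fun _ => (arcLen k)⁻¹) θ‖₊ : ℝ≥0∞) := by
            exact_mod_cast nnnorm_sum_le _ _
        _ ≤ _ := Finset.sum_le_sum (fun k _ => by exact_mod_cast nnnorm_sum_le _ _)
    refine hb1.trans (le_of_eq ?_)
    rw [lintegral_finset_sum _ (fun k _ => Finset.measurable_sum _ (fun m _ => hmeasT k m))]
    refine Finset.sum_congr rfl (fun k _ => ?_)
    rw [lintegral_finset_sum _ (fun m _ => hmeasT k m)]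
    exact Finset.sum_congr rfl (fun m _ => lintegral_term δ m.isLt _)
  -- rewrite double sum as a sum over Bs
  set P : ℝ := ∑ p ∈ Bs, |haarCoeff δ p.1 p.2 a| * |haarCoeff δ p.1 p.2 b| with hPdef
  have hdisj : (↑Ks : Set ℕ).PairwiseDisjoint
      (fun k => (Finset.range (2^k)).image (fun m => (k, m))) := by
    intro k1 _ k2 _ hne
    apply Finset.disjoint_left.mpr
    intro p hp1 hp2
    simp only [Finset.mem_image, Finset.mem_range] at hp1 hp2
    obtain ⟨m1, _, rfl⟩ := hp1
    obtain ⟨m2, _, h⟩ := hp2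
    injection h with h1 h2
    exact hne h1.symm
  have hsum_eq : ∑ k ∈ Ks, ∑ m : Fin (2^k),
      ENNReal.ofReal |haarCoeff δ k (↑m) a * haarCoeff δ k (↑m) b| = ENNReal.ofReal P := by
    rw [hPdef, ENNReal.ofReal_sum_of_nonneg
      (fun p _ => mul_nonneg (abs_nonneg _) (abs_nonneg _)), hBs,
      Finset.sum_biUnion hdisj]
    refine (Finset.sum_congr rfl (fun k _ => ?_)).symm
    rw [Finset.sum_image (fun m1 _ m2 _ h => by injection h)]
    rw [← Fin.sum_univ_eq_sum_range
      (fun m => ENNReal.ofReal (|haarCoeff δ k m a| * |haarCoeff δ k m b|)) (2^k)]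
    exact Finset.sum_congr rfl (fun m _ => by rw [← abs_mul])
  set Bs' : Finset (ℕ × ℕ) := Bs.filter (fun p => haarCoeff δ p.1 p.2 a ≠ 0) with hBs'f
  have hPBs' : P = ∑ p ∈ Bs', |haarCoeff δ p.1 p.2 a| * |haarCoeff δ p.1 p.2 b| := by
    rw [hPdef, hBs'f]
    refine (Finset.sum_filter_of_ne ?_).symm
    intro p hp hfne hc0
    exact hfne (by rw [hc0, abs_zero, zero_mul])
  have hBs'prop : ∀ p ∈ Bs', p.2 < 2 ^ p.1 ∧ arc δ p.1 p.2 ⊆ arc δ K M := by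
    intro p hp
    rw [hBs'f, Finset.mem_filter] at hp
    refine ⟨((hmemBs p).1 hp.1).2, ?_⟩
    by_contra hcon
    exact hp.2 (haarCoeff_eq_zero ha_supp ha_int0 hcon)
  -- the orthonormal Haar system
  have hv : Orthonormal ℝ (fun i : {p : ℕ × ℕ // p.2 < 2 ^ p.1} =>
      MemLp.toLp (haar δ i.1.1 i.1.2) (memLp_haar δ i.1.1 i.1.2)) := by
    rw [orthonormal_iff_ite]
    intro i j
    rw [inner_toLp δ (memLp_haar δ i.1.1 i.1.2) (memLp_haar δ j.1.1 j.1.2)]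
    by_cases hij : i = j
    · subst hij
      rw [if_pos rfl]
      exact integral_haar_sq δ i.2
    · rw [if_neg hij]
      refine integral_haar_mul δ i.2 j.2 (fun h => hij (Subtype.ext ?_))
      exact Prod.ext (congrArg Prod.fst h) (congrArg Prod.snd h)
  set sI : Finset {p : ℕ × ℕ // p.2 < 2 ^ p.1} :=
    Bs'.attach.map ⟨fun q => ⟨q.1, (hBs'prop q.1 q.2).1⟩, by
      intro x y h
      have h2 := congrArg Subtype.val h
      exact Subtype.ext h2⟩ with hsI
  have htrans : ∀ F : ℕ × ℕ → ℝ, ∑ i ∈ sI, F i.1 = ∑ p ∈ Bs', F p := by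
    intro F
    rw [hsI, Finset.sum_map]
    exact Finset.sum_attach _ _
  -- Bessel for a
  have hxa : ∀ i : {p : ℕ × ℕ // p.2 < 2 ^ p.1},
      ⟪MemLp.toLp (haar δ i.1.1 i.1.2) (memLp_haar δ i.1.1 i.1.2), MemLp.toLp a ha_mem⟫
        = haarCoeff δ i.1.1 i.1.2 a := by
    intro i
    rw [inner_toLp δ (memLp_haar δ i.1.1 i.1.2) ha_mem]
    unfold haarCoeff
    simp_rw [mul_comm]
  have hbesa : ∑ p ∈ Bs', (haarCoeff δ p.1 p.2 a)^2 ≤ ‖MemLp.toLp a ha_mem‖^2 := by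
    rw [← htrans (fun p => (haarCoeff δ p.1 p.2 a)^2)]
    calc ∑ i ∈ sI, (haarCoeff δ i.1.1 i.1.2 a)^2
        = ∑ i ∈ sI, ‖⟪MemLp.toLp (haar δ i.1.1 i.1.2) (memLp_haar δ i.1.1 i.1.2),
            MemLp.toLp a ha_mem⟫‖^2 :=
          Finset.sum_congr rfl (fun i _ => by rw [hxa i, Real.norm_eq_abs, sq_abs])
      _ ≤ _ := Orthonormal.sum_inner_products_le _ hv
  have hna : ‖MemLp.toLp a ha_mem‖^2 ≤ (arcLen K)⁻¹ := by
    have h1 : ‖MemLp.toLp a ha_mem‖ = (eLpNorm a 2 (volume.restrict (torus δ))).toReal :=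
      Lp.norm_toLp a ha_mem
    have h2 : (eLpNorm a 2 (volume.restrict (torus δ))).toReal ≤ (arcLen K) ^ (-(1:ℝ)/2) := by
      calc (eLpNorm a 2 (volume.restrict (torus δ))).toReal
          ≤ (ENNReal.ofReal ((arcLen K) ^ (-(1:ℝ)/2))).toReal :=
            ENNReal.toReal_mono ENNReal.ofReal_ne_top ha_norm
        _ = (arcLen K) ^ (-(1:ℝ)/2) := ENNReal.toReal_ofReal (rpow_haar_pos K).le
    calc ‖MemLp.toLp a ha_mem‖^2 ≤ ((arcLen K) ^ (-(1:ℝ)/2))^2 :=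
          pow_le_pow_left₀ (norm_nonneg _) (h1 ▸ h2) 2
      _ = (arcLen K)⁻¹ := rpow_haar_sq K
  -- Bessel for b
  set cb : ℝ := arcAvg δ K M b with hcb
  set g : ℝ → ℝ := (arc δ K M).indicator (fun θ => b θ - cb) with hgdef
  have hg_mem : MemLp g 2 (volume.restrict (torus δ)) :=
    (hb_mem.sub (memLp_const cb)).indicator (measurableSet_arc δ K M)
  have hib : Integrable b (volume.restrict (torus δ)) := hb_mem.integrable one_le_two
  have hkeyb : ∀ i : {p : ℕ × ℕ // p.2 < 2 ^ p.1}, arc δ i.1.1 i.1.2 ⊆ arc δ K M →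
      ⟪MemLp.toLp (haar δ i.1.1 i.1.2) (memLp_haar δ i.1.1 i.1.2), MemLp.toLp g hg_mem⟫
        = haarCoeff δ i.1.1 i.1.2 b := by
    intro i hsub
    rw [inner_toLp δ (memLp_haar δ i.1.1 i.1.2) hg_mem]
    have e1 : ∀ θ, haar δ i.1.1 i.1.2 θ * g θ
        = haar δ i.1.1 i.1.2 θ * b θ - cb * haar δ i.1.1 i.1.2 θ := by
      intro θ
      by_cases hθ : θ ∈ arc δ K M
      · rw [hgdef, Set.indicator_of_mem hθ]; ring
      · have hz : haar δ i.1.1 i.1.2 θ = 0 := haar_eq_zero (fun hmem => hθ (hsub hmem))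
        rw [hz, hgdef, Set.indicator_of_notMem hθ]; ring
    simp_rw [e1]
    have h1' : Integrable (fun θ => haar δ i.1.1 i.1.2 θ * b θ) (volume.restrict (torus δ)) :=
      Integrable.bdd_mul hib (measurable_haar δ _ _).aestronglyMeasurable (Filter.Eventually.of_forall (abs_haar_le δ _ _))
    have h2' : Integrable (fun θ => cb * haar δ i.1.1 i.1.2 θ) (volume.restrict (torus δ)) :=
      ((memLp_haar δ _ _).integrable one_le_two).const_mul cb
    rw [integral_sub h1' h2', integral_const_mul, integral_haar δ i.2, mul_zero, sub_zero]
    unfold haarCoeff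
    simp_rw [mul_comm]
  have hbesb : ∑ p ∈ Bs', (haarCoeff δ p.1 p.2 b)^2 ≤ ‖MemLp.toLp g hg_mem‖^2 := by
    rw [← htrans (fun p => (haarCoeff δ p.1 p.2 b)^2)]
    calc ∑ i ∈ sI, (haarCoeff δ i.1.1 i.1.2 b)^2
        = ∑ i ∈ sI, ‖⟪MemLp.toLp (haar δ i.1.1 i.1.2) (memLp_haar δ i.1.1 i.1.2),
            MemLp.toLp g hg_mem⟫‖^2 := by
          refine Finset.sum_congr rfl (fun i hi => ?_)
          have hiBs' : i.1 ∈ Bs' := by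
            rw [hsI] at hi
            obtain ⟨q, hq, rfl⟩ := Finset.mem_map.1 hi
            exact q.2
          rw [hkeyb i (hBs'prop i.1 hiBs').2, Real.norm_eq_abs, sq_abs]
      _ ≤ _ := Orthonormal.sum_inner_products_le _ hv
  have hy2 : ‖MemLp.toLp g hg_mem‖^2 = ∫ θ in arc δ K M, (b θ - cb)^2 := by
    rw [← real_inner_self_eq_norm_sq, inner_toLp δ hg_mem hg_mem]
    have e : ∀ θ, g θ * g θ = (arc δ K M).indicator (fun θ => (b θ - cb)^2) θ := by
      intro θ
      by_cases hθ : θ ∈ arc δ K M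
      · rw [hgdef]
        rw [Set.indicator_of_mem hθ, Set.indicator_of_mem hθ]; ring
      · rw [hgdef]
        rw [Set.indicator_of_notMem hθ, Set.indicator_of_notMem hθ, mul_zero]
    simp_rw [e]
    rw [setIntegral_indicator (measurableSet_arc δ K M),
      Set.inter_eq_self_of_subset_right (arc_subset_torus hM)]
  -- compare with the BMO norm
  have hBle : ENNReal.ofReal (∫ θ in arc δ K M, (b θ - cb)^2)
      ≤ ∫⁻ θ in arc δ K M, (‖b θ - cb‖₊ : ℝ≥0∞)^2 := by
    have hm2 : MemLp (fun θ => b θ - cb) 2 (volume.restrict (arc δ K M)) :=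
      MemLp.mono_measure (Measure.restrict_mono (arc_subset_torus hM) le_rfl)
        (hb_mem.sub (memLp_const cb))
    have hint : Integrable (fun θ => (b θ - cb)^2) (volume.restrict (arc δ K M)) :=
      (memLp_two_iff_integrable_sq ((hb_meas.sub measurable_const).aestronglyMeasurable)).1 hm2
    rw [ofReal_integral_eq_lintegral_ofReal hint
      (Filter.Eventually.of_forall (fun θ => sq_nonneg _))]
    apply le_of_eq
    apply lintegral_congr
    intro θ
    calc ENNReal.ofReal ((b θ - cb)^2) = ENNReal.ofReal (|b θ - cb|^2) := by rw [sq_abs]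
      _ = (ENNReal.ofReal |b θ - cb|)^2 := by rw [ENNReal.ofReal_pow (abs_nonneg _)]
      _ = ((‖b θ - cb‖₊ : ℝ≥0∞))^2 := by rw [← enorm_eq_nnnorm, Real.enorm_eq_ofReal_abs]
  set T : ℝ≥0∞ := ⨆ (k : ℕ) (m : Fin (2 ^ k)),
      ((ENNReal.ofReal (arcLen k))⁻¹) ^ 2 *
        ∫⁻ θ in arc δ k (↑m), (‖b θ - arcAvg δ k (↑m) b‖₊ : ℝ≥0∞) ^ 2 with hT
  have hTterm : ((ENNReal.ofReal (arcLen K))⁻¹) ^ 2 *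
      (∫⁻ θ in arc δ K M, (‖b θ - cb‖₊ : ℝ≥0∞)^2) ≤ T := by
    rw [hT, hcb]
    exact le_iSup_of_le K (le_iSup_of_le (⟨M, hM⟩ : Fin (2^K)) le_rfl)
  have hXle : (∫⁻ θ in arc δ K M, (‖b θ - cb‖₊ : ℝ≥0∞)^2)
      ≤ (ENNReal.ofReal (arcLen K))^2 * T := by
    have h0 : (ENNReal.ofReal (arcLen K)) ≠ 0 := (ENNReal.ofReal_pos.2 (arcLen_pos K)).ne'
    have htop : (ENNReal.ofReal (arcLen K)) ≠ ⊤ := ENNReal.ofReal_ne_top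
    calc (∫⁻ θ in arc δ K M, (‖b θ - cb‖₊ : ℝ≥0∞)^2)
        = ((ENNReal.ofReal (arcLen K))^2 * ((ENNReal.ofReal (arcLen K))^2)⁻¹) *
            (∫⁻ θ in arc δ K M, (‖b θ - cb‖₊ : ℝ≥0∞)^2) := by
          rw [ENNReal.mul_inv_cancel (pow_ne_zero 2 h0) (ENNReal.pow_ne_top htop), one_mul]
      _ = (ENNReal.ofReal (arcLen K))^2 * (((ENNReal.ofReal (arcLen K))⁻¹)^2 *
            (∫⁻ θ in arc δ K M, (‖b θ - cb‖₊ : ℝ≥0∞)^2)) := by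
          rw [mul_assoc, ENNReal.inv_pow]
      _ ≤ (ENNReal.ofReal (arcLen K))^2 * T := mul_le_mul_right hTterm _
  -- Cauchy-Schwarz
  have hPsq : P^2 ≤ (arcLen K)⁻¹ * ‖MemLp.toLp g hg_mem‖^2 := by
    rw [hPBs']
    calc (∑ p ∈ Bs', |haarCoeff δ p.1 p.2 a| * |haarCoeff δ p.1 p.2 b|)^2
        ≤ (∑ p ∈ Bs', |haarCoeff δ p.1 p.2 a|^2) * (∑ p ∈ Bs', |haarCoeff δ p.1 p.2 b|^2) :=
          Finset.sum_mul_sq_le_sq_mul_sq _ _ _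
      _ = (∑ p ∈ Bs', (haarCoeff δ p.1 p.2 a)^2) * (∑ p ∈ Bs', (haarCoeff δ p.1 p.2 b)^2) := by
          simp_rw [sq_abs]
      _ ≤ (arcLen K)⁻¹ * ‖MemLp.toLp g hg_mem‖^2 :=
          mul_le_mul (hbesa.trans hna) hbesb
            (Finset.sum_nonneg (fun p _ => sq_nonneg _))
            (inv_nonneg.2 (arcLen_pos K).le)
  have hPnn : 0 ≤ P := by
    rw [hPBs']
    exact Finset.sum_nonneg (fun p _ => mul_nonneg (abs_nonneg _) (abs_nonneg _))
  have hP_le : P ≤ Real.sqrt ((arcLen K)⁻¹ * ‖MemLp.toLp g hg_mem‖^2) := by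
    rw [← Real.sqrt_sq hPnn]
    exact Real.sqrt_le_sqrt hPsq
  have hsqrtmul : Real.sqrt ((arcLen K)⁻¹) * arcLen K = Real.sqrt (arcLen K) := by
    rw [Real.sqrt_inv]
    have h1 : Real.sqrt (arcLen K) ≠ 0 := (Real.sqrt_pos.2 (arcLen_pos K)).ne'
    field_simp
    rw [Real.sq_sqrt (arcLen_pos K).le]
  -- final chain
  calc (∫⁻ θ in torus δ, (‖Pi3 δ a b θ‖₊ : ℝ≥0∞))
      ≤ ∑ k ∈ Ks, ∑ m : Fin (2^k),
          ENNReal.ofReal |haarCoeff δ k (↑m) a * haarCoeff δ k (↑m) b| := hstep1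
    _ = ENNReal.ofReal P := hsum_eq
    _ ≤ ENNReal.ofReal (Real.sqrt ((arcLen K)⁻¹ * ‖MemLp.toLp g hg_mem‖^2)) :=
        ENNReal.ofReal_le_ofReal hP_le
    _ = ENNReal.ofReal (Real.sqrt ((arcLen K)⁻¹)) *
          ENNReal.ofReal (Real.sqrt (‖MemLp.toLp g hg_mem‖^2)) := by
        rw [← ENNReal.ofReal_mul (Real.sqrt_nonneg _),
          ← Real.sqrt_mul (inv_nonneg.2 (arcLen_pos K).le)]
    _ = ENNReal.ofReal (Real.sqrt ((arcLen K)⁻¹)) *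
          (ENNReal.ofReal (‖MemLp.toLp g hg_mem‖^2)) ^ (1/2 : ℝ) := by
        congr 1
        rw [Real.sqrt_eq_rpow, ← ENNReal.ofReal_rpow_of_nonneg (sq_nonneg _) (by norm_num)]
    _ ≤ ENNReal.ofReal (Real.sqrt ((arcLen K)⁻¹)) *
          ((ENNReal.ofReal (arcLen K))^2 * T) ^ (1/2 : ℝ) := by
        apply mul_le_mul_right
        apply ENNReal.rpow_le_rpow _ (by norm_num)
        rw [hy2]
        exact hBle.trans hXle
    _ = ENNReal.ofReal (Real.sqrt ((arcLen K)⁻¹)) *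
          (ENNReal.ofReal (arcLen K) * T ^ (1/2 : ℝ)) := by
        rw [ENNReal.mul_rpow_of_nonneg _ _ (by norm_num)]
        congr 1
        rw [← ENNReal.rpow_natCast (ENNReal.ofReal (arcLen K)) 2, ← ENNReal.rpow_mul]
        norm_num
    _ = ENNReal.ofReal (Real.sqrt (arcLen K)) * T ^ (1/2 : ℝ) := by
        rw [← mul_assoc, ← ENNReal.ofReal_mul (Real.sqrt_nonneg _), hsqrtmul]
    _ ≤ ENNReal.ofReal (Real.sqrt (2*π) + 1) * bmoNorm δ b := by
        apply mul_le_mul'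
        · apply ENNReal.ofReal_le_ofReal
          have := Real.sqrt_le_sqrt (arcLen_le K)
          linarith
        · show T ^ (1/2 : ℝ) ≤ bmoNorm δ b
          unfold bmoNorm
          rw [← hT]
          exact le_self_add


end
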